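/- Let r : ℝ → ℝ be a C² function satisfying r̈(u) = f(u)·r(u) for all u, where f : ℝ → ℝ is continuous and strictly positive, with r(0) = 1 and ṙ(0) = 0. Then r(u) > 0 for all u, and the improper integrals ∫₀^∞ du/r(u)² and ∫_{−∞}^0 du/r(u)² are both finite. -/

import Mathlib

open MeasureTheory

lemma aux_main (f r r' : ℝ → ℝ)
    (hfpos : ∀ u, 0 < f u)
    (hrd : ∀ u, HasDerivAt r (r' u) u)
    (hrd' : ∀ u, HasDerivAt r' (f u * r u) u)
    (h0 : r 0 = 1) (h0' : r' 0 = 0) :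
    (∀ u, 0 ≤ u → 1 ≤ r u) ∧
    IntegrableOn (fun u => 1 / (r u)^2) (Set.Ici 0) volume := by
  have hrc : Continuous r := continuous_iff_continuousAt.2 fun u => (hrd u).continuousAt
  have hr'c : Continuous r' := continuous_iff_continuousAt.2 fun u => (hrd' u).continuousAt
  -- positivity on [0, ∞)
  have pos : ∀ t, 0 ≤ t → 0 < r t := by
    by_contra h; push_neg at h
    obtain ⟨t, ht0, htr⟩ := h
    set K := Set.Icc 0 t ∩ r ⁻¹' Set.Iic 0 with hK
    have hKc : IsClosed K := isClosed_Icc.inter (isClosed_Iic.preimage hrc)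
    have hKne : K.Nonempty := ⟨t, ⟨ht0, le_refl t⟩, htr⟩
    have hKbdd : BddBelow K := ⟨0, fun x hx => hx.1.1⟩
    set t0 := sInf K with ht0def
    have ht0K : t0 ∈ K := hKc.csInf_mem hKne hKbdd
    have ht00 : 0 ≤ t0 := ht0K.1.1
    have hrt0 : r t0 ≤ 0 := ht0K.2
    have hpos : ∀ u ∈ Set.Ico 0 t0, 0 < r u := by
      intro u hu
      by_contra h'
      push_neg at h'
      have hu' : u ∈ K := ⟨⟨hu.1, hu.2.le.trans ht0K.1.2⟩, h'⟩
      exact absurd (csInf_le hKbdd hu') (not_le.2 hu.2)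
    have h1 : StrictMonoOn r' (Set.Icc 0 t0) := by
      apply strictMonoOn_of_deriv_pos (convex_Icc 0 t0) hr'c.continuousOn
      intro x hx
      rw [interior_Icc] at hx
      rw [(hrd' x).deriv]
      exact mul_pos (hfpos x) (hpos x ⟨hx.1.le, hx.2⟩)
    have h2 : StrictMonoOn r (Set.Icc 0 t0) := by
      apply strictMonoOn_of_deriv_pos (convex_Icc 0 t0) hrc.continuousOn
      intro x hx
      rw [interior_Icc] at hx
      rw [(hrd x).deriv]
      have := h1 ⟨le_refl 0, ht00⟩ ⟨hx.1.le, hx.2.le⟩ hx.1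
      linarith [h0']
    have ht0ne : t0 ≠ 0 := by
      intro h; rw [h, h0] at hrt0; linarith
    have : r 0 < r t0 :=
      h2 ⟨le_refl 0, ht00⟩ ⟨ht00, le_refl t0⟩ (lt_of_le_of_ne ht00 (Ne.symm ht0ne))
    rw [h0] at this; linarith
  -- r' strictly increasing on [0, ∞)
  have h1' : StrictMonoOn r' (Set.Ici 0) := by
    apply strictMonoOn_of_deriv_pos (convex_Ici 0) hr'c.continuousOn
    intro x hx
    rw [interior_Ici] at hx
    rw [(hrd' x).deriv]
    exact mul_pos (hfpos x) (pos x hx.le)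
  have hr'pos : ∀ u, 0 < u → 0 < r' u := by
    intro u hu
    have := h1' Set.self_mem_Ici (le_of_lt hu) hu
    linarith [h0']
  have h2' : StrictMonoOn r (Set.Ici 0) := by
    apply strictMonoOn_of_deriv_pos (convex_Ici 0) hrc.continuousOn
    intro x hx
    rw [interior_Ici] at hx
    rw [(hrd x).deriv]
    exact hr'pos x hx
  have hge1 : ∀ u, 0 ≤ u → 1 ≤ r u := by
    intro u hu
    have := h2'.monotoneOn Set.self_mem_Ici hu hu
    rw [h0] at this; exact this
  refine ⟨hge1, ?_⟩
  -- linear growth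
  set c := min (r' 1) 1 with hcdef
  have hc : 0 < c := lt_min (hr'pos 1 one_pos) one_pos
  have hc1 : c ≤ 1 := min_le_right _ _
  have hlin : ∀ u, 1 ≤ u → c * u ≤ r u := by
    have hg : MonotoneOn (fun u => r u - c * u) (Set.Ici 1) := by
      apply monotoneOn_of_deriv_nonneg (convex_Ici 1)
        ((hrc.sub (continuous_const.mul continuous_id)).continuousOn)
      · intro x hx
        exact ((hrd x).sub ((hasDerivAt_id x).const_mul c)).differentiableAt.differentiableWithinAt
      · intro x hx
        rw [interior_Ici] at hx
        rw [show deriv (r - (fun x => min (r' 1) 1) * id) x = r' x - c * 1 from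
          ((hrd x).sub ((hasDerivAt_id x).const_mul c)).deriv]
        have hmono : r' 1 ≤ r' x := h1'.monotoneOn (by norm_num) (by
          simp only [Set.mem_Ici]; linarith [hx.out]) hx.out.le
        have := min_le_left (r' 1) 1
        simp only [mul_one]
        linarith
    intro u hu
    have := hg Set.self_mem_Ici hu hu
    simp only [mul_one] at this
    have hr1 : 1 ≤ r 1 := hge1 1 one_pos.le
    linarith
  -- integrability
  have hcontOn : ContinuousOn (fun u => 1 / (r u)^2) (Set.Ici 0) := by
    apply ContinuousOn.div continuousOn_const ((hrc.pow 2).continuousOn)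
    intro x hx
    exact pow_ne_zero 2 (ne_of_gt (pos x hx))
  rw [← Set.Icc_union_Ioi_eq_Ici (zero_le_one (α := ℝ)), integrableOn_union]
  constructor
  · exact hcontOn.mono (Set.Icc_subset_Ici_self) |>.integrableOn_Icc
  · apply Integrable.mono'
      ((integrableOn_Ioi_rpow_of_lt (show (-2:ℝ) < -1 by norm_num) one_pos).const_mul (c⁻¹^2))
    · exact (hcontOn.mono (fun x hx => zero_le_one.trans hx.out.le)).aestronglyMeasurable
        measurableSet_Ioi
    · filter_upwards [ae_restrict_mem measurableSet_Ioi] with u hu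
      have hu1 : (1:ℝ) < u := hu
      have hu0 : (0:ℝ) < u := lt_trans one_pos hu1
      have hcu : 0 < c * u := by positivity
      have hru : c * u ≤ r u := hlin u hu1.le
      have hrpos : 0 < r u := lt_of_lt_of_le hcu hru
      rw [Real.norm_eq_abs, abs_of_nonneg (by positivity)]
      have hpow : u ^ (-2:ℝ) = (u ^ (2:ℕ))⁻¹ := by
        rw [show (-2:ℝ) = -((2:ℕ):ℝ) by norm_num, Real.rpow_neg hu0.le, Real.rpow_natCast]
      rw [hpow]
      have heq : c⁻¹^2 * (u ^ (2:ℕ))⁻¹ = 1 / (c * u)^2 := by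
        rw [mul_pow]; field_simp
      rw [heq]
      apply one_div_le_one_div_of_le (by positivity)
      exact pow_le_pow_left₀ hcu.le hru 2

/-- If `r̈ = f·r` with `f` continuous and strictly positive,
`r(0) = 1`, `ṙ(0) = 0`, then `r > 0` everywhere and `1/r²` is integrable on
`[0,∞)` and on `(−∞,0]`. -/
theorem stmt_2 (f r r' r'' : ℝ → ℝ)
    (hf : Continuous f) (hfpos : ∀ u, 0 < f u)
    (hrd : ∀ u, HasDerivAt r (r' u) u)
    (hrd' : ∀ u, HasDerivAt r' (r'' u) u)
    (hODE : ∀ u, r'' u = f u * r u)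
    (h0 : r 0 = 1) (h0' : r' 0 = 0) :
    (∀ u, 0 < r u) ∧
    IntegrableOn (fun u => 1 / (r u)^2) (Set.Ici 0) volume ∧
    IntegrableOn (fun u => 1 / (r u)^2) (Set.Iic 0) volume := by
  have hrd'' : ∀ u, HasDerivAt r' (f u * r u) u := by
    intro u; rw [← hODE u]; exact hrd' u
  obtain ⟨hge1, hint⟩ := aux_main f r r' hfpos hrd hrd'' h0 h0'
  -- reflected problem
  have hRd : ∀ u, HasDerivAt (fun x => r (-x)) (-r' (-u)) u := by
    intro u
    have := (hrd (-u)).comp u (hasDerivAt_neg u)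
    simpa [mul_comm, Function.comp_def] using this
  have hRd' : ∀ u, HasDerivAt (fun x => -r' (-x)) (f (-u) * r (-u)) u := by
    intro u
    have := ((hrd'' (-u)).comp u (hasDerivAt_neg u)).neg
    have h2 : -(f (-u) * r (-u) * -1) = f (-u) * r (-u) := by ring
    rw [h2] at this
    exact this
  obtain ⟨hge1', hint'⟩ := aux_main (fun u => f (-u)) (fun u => r (-u)) (fun u => -r' (-u))
    (fun u => hfpos (-u)) hRd hRd' (by simpa using h0) (by simpa using h0')
  refine ⟨?_, hint, ?_⟩
  · intro u
    rcases le_total 0 u with h | h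
    · linarith [hge1 u h]
    · have := hge1' (-u) (by linarith)
      simp only [neg_neg] at this
      linarith
  · rw [← (Measure.measurePreserving_neg (volume : Measure ℝ)).integrableOn_comp_preimage
      (Homeomorph.neg ℝ).measurableEmbedding]
    simp only [Function.comp_def, Set.neg_preimage, Set.neg_Iic, neg_zero]
    exact hint'
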